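/- Let E = {1, 2, 3, …} (the positive integers) and let P be the Markov kernel with P(1,·) = δ₁ and, for i ≥ 2, P(i,·) = (1 − 2^{1−i})·δ₁ + 2^{1−i}·δ_{i+1}. Then: (i) for every n ≥ 1 one has P_n(1, {n+2}) = 0 while P_n(2, {n+2}) > 0, so the strong mixing condition (A.3) fails for every n and L; and (ii) nevertheless, for every bounded g : E → ℝ a bounded MPE solution exists: there are a bounded w : E → ℝ and λ ∈ ℝ with w(x) = g(x) − λ + log ∫_E e^{w(y)} P(x,dy) for all x ∈ E. -/

import Mathlib

open MeasureTheory ProbabilityTheory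

instance : MeasurableSpace ℕ+ := ⊤

/-- The `n`-step kernel `P_n`: the `n`-fold composition of `P` with itself
(`stepKernel P 0` is the identity kernel and `stepKernel P 1 = P`). -/
noncomputable def stepKernel {E : Type*} [MeasurableSpace E] (P : Kernel E E) : ℕ → Kernel E E
  | 0 => Kernel.id
  | n + 1 => (stepKernel P n) ∘ₖ P

instance : MeasurableSingletonClass ℕ+ := ⟨fun _ => MeasurableSpace.measurableSet_top⟩

namespace MpeCE

noncomputable def q (m : ℕ) : ℝ := (2 : ℝ) ^ ((1 : ℝ) - (m : ℝ))

lemma q_pos (m : ℕ) : 0 < q m := Real.rpow_pos_of_pos two_pos _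

lemma q_le_pow {m : ℕ} (hm : 2 ≤ m) (j : ℕ) : q (m + j) ≤ (1 / 2 : ℝ) ^ (j + 1) := by
  have h1 : q (m + j) ≤ (2 : ℝ) ^ (-(1 + (j : ℝ))) := by
    apply Real.rpow_le_rpow_of_exponent_le one_le_two
    have : (2 : ℝ) ≤ (m : ℝ) := by exact_mod_cast hm
    push_cast
    linarith
  have h2 : (2 : ℝ) ^ (-(1 + (j : ℝ))) = (1 / 2 : ℝ) ^ (j + 1) := by
    rw [Real.rpow_neg (by norm_num)]
    rw [show (1 + (j : ℝ)) = ((j + 1 : ℕ) : ℝ) by push_cast; ring]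
    rw [Real.rpow_natCast]
    rw [one_div, inv_pow]
  linarith [h1, h2.le]

lemma q_le_half {m : ℕ} (hm : 2 ≤ m) : q m ≤ 1 / 2 := by
  have := q_le_pow hm 0
  simpa using this

noncomputable def t (a : ℕ → ℝ) (m k : ℕ) : ℝ :=
  (∏ j ∈ Finset.range k, a (m + j) * q (m + j)) * (a (m + k) * (1 - q (m + k)))

noncomputable def b (ea : ℝ) (k : ℕ) : ℝ :=
  (∏ j ∈ Finset.range k, ea * (1 / 2 : ℝ) ^ (j + 1)) * ea

section
variable {a : ℕ → ℝ} {ea : ℝ} (ha : ∀ m, 0 < a m) (hae : ∀ m, a m ≤ ea) (hea : 1 ≤ ea)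

include ha in
lemma t_pos {m : ℕ} (hm : 2 ≤ m) (k : ℕ) : 0 < t a m k := by
  apply mul_pos
  · exact Finset.prod_pos fun j _ => mul_pos (ha _) (q_pos _)
  · apply mul_pos (ha _)
    have := q_le_half (show 2 ≤ m + k by omega)
    linarith

include ha hae hea in
lemma t_le_b {m : ℕ} (hm : 2 ≤ m) (k : ℕ) : t a m k ≤ b ea k := by
  have hea0 : 0 < ea := lt_of_lt_of_le one_pos hea
  apply mul_le_mul
  · apply Finset.prod_le_prod
    · intro j _
      exact (mul_pos (ha _) (q_pos _)).le
    · intro j _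
      apply mul_le_mul (hae _) (q_le_pow hm j) (q_pos _).le hea0.le
  · have h1 : a (m + k) * (1 - q (m + k)) ≤ a (m + k) * 1 := by
      apply mul_le_mul_of_nonneg_left _ (ha _).le
      linarith [q_pos (m + k)]
    calc a (m + k) * (1 - q (m + k)) ≤ a (m + k) * 1 := h1
      _ = a (m + k) := mul_one _
      _ ≤ ea := hae _
  · apply mul_nonneg (ha _).le
    have := q_le_half (show 2 ≤ m + k by omega)
    linarith
  · apply Finset.prod_nonneg
    intro j _
    positivity

include hea in
lemma b_pos (k : ℕ) : 0 < b ea k := by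
  have hea0 : 0 < ea := lt_of_lt_of_le one_pos hea
  apply mul_pos _ hea0
  exact Finset.prod_pos fun j _ => by positivity

include hea in
lemma b_summable : Summable (b ea) := by
  have hea0 : 0 < ea := lt_of_lt_of_le one_pos hea
  apply summable_of_ratio_norm_eventually_le (r := 1 / 2) (by norm_num)
  have htend : Filter.Tendsto (fun k : ℕ => ea * (1 / 2 : ℝ) ^ (k + 1)) Filter.atTop (nhds 0) := by
    have h0 : Filter.Tendsto (fun k : ℕ => (1 / 2 : ℝ) ^ k) Filter.atTop (nhds 0) :=
      tendsto_pow_atTop_nhds_zero_of_lt_one (by norm_num) (by norm_num)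
    have h1 := h0.const_mul (ea * (1 / 2))
    rw [mul_zero] at h1
    have heq : (fun k : ℕ => ea * (1 / 2 : ℝ) ^ (k + 1))
        = fun k : ℕ => (ea * (1 / 2)) * (1 / 2 : ℝ) ^ k := by
      funext k; ring
    rw [heq]
    exact h1
  have hev : ∀ᶠ k in Filter.atTop, ea * (1 / 2 : ℝ) ^ (k + 1) ≤ 1 / 2 :=
    htend.eventually (eventually_le_nhds (by norm_num))
  filter_upwards [hev] with k hk
  have hb : b ea (k + 1) = (ea * (1 / 2 : ℝ) ^ (k + 1)) * b ea k := by
    simp only [b, Finset.prod_range_succ]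
    ring
  rw [Real.norm_eq_abs, Real.norm_eq_abs, abs_of_pos (b_pos hea _), abs_of_pos (b_pos hea _), hb]
  exact mul_le_mul_of_nonneg_right hk (b_pos hea k).le

include ha hae hea in
lemma t_summable {m : ℕ} (hm : 2 ≤ m) : Summable (t a m) :=
  Summable.of_nonneg_of_le (fun k => (t_pos ha hm k).le) (fun k => t_le_b ha hae hea hm k)
    (b_summable hea)

end

noncomputable def u (a : ℕ → ℝ) (m : ℕ) : ℝ := if m ≤ 1 then 1 else ∑' k, t a m k

lemma t_zero (a : ℕ → ℝ) (m : ℕ) : t a m 0 = a m * (1 - q m) := by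
  simp [t]

lemma t_succ (a : ℕ → ℝ) (m k : ℕ) : t a m (k + 1) = (a m * q m) * t a (m + 1) k := by
  have hp : ∏ j ∈ Finset.range k, a (m + (j + 1)) * q (m + (j + 1))
      = ∏ j ∈ Finset.range k, a ((m + 1) + j) * q ((m + 1) + j) :=
    Finset.prod_congr rfl fun j _ => by rw [show m + (j + 1) = (m + 1) + j by omega]
  unfold t
  rw [Finset.prod_range_succ', hp, show m + (k + 1) = (m + 1) + k by omega]
  simp only [add_zero]
  ring

section
variable {a : ℕ → ℝ} {ea : ℝ} (ha : ∀ m, 0 < a m) (hae : ∀ m, a m ≤ ea) (hea : 1 ≤ ea)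

include ha hae hea in
lemma u_rec {m : ℕ} (hm : 2 ≤ m) :
    u a m = a m * ((1 - q m) + q m * u a (m + 1)) := by
  have h1 : u a m = ∑' k, t a m k := if_neg (by omega)
  have h2 : u a (m + 1) = ∑' k, t a (m + 1) k := if_neg (by omega)
  rw [h1, h2, Summable.tsum_eq_zero_add (t_summable ha hae hea hm)]
  simp only [t_succ, t_zero]
  rw [tsum_mul_left]
  ring

include ha hae hea in
lemma u_lower {m : ℕ} (hm : 2 ≤ m) : a m * (1 / 2) ≤ u a m := by
  have h1 : u a m = ∑' k, t a m k := if_neg (by omega)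
  have h2 : t a m 0 ≤ ∑' k, t a m k :=
    Summable.le_tsum (t_summable ha hae hea hm) 0 (fun j _ => (t_pos ha hm j).le)
  rw [h1]
  refine le_trans ?_ h2
  rw [t_zero]
  apply mul_le_mul_of_nonneg_left _ (ha m).le
  linarith [q_le_half hm]

include ha hae hea in
lemma u_le (m : ℕ) : u a m ≤ max (∑' k, b ea k) 1 := by
  unfold u
  split_ifs with h
  · exact le_max_right _ _
  · refine le_trans ?_ (le_max_left _ _)
    exact Summable.tsum_le_tsum (fun k => t_le_b ha hae hea (by omega) k)
      (t_summable ha hae hea (by omega)) (b_summable hea)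

include ha hae hea in
lemma u_pos (m : ℕ) : 0 < u a m := by
  unfold u
  split_ifs with h
  · norm_num
  · calc (0:ℝ) < a m * (1 / 2) := mul_pos (ha m) (by norm_num)
      _ ≤ u a m := u_lower ha hae hea (by omega)
      _ = ∑' k, t a m k := if_neg h

end

end MpeCE

/-- On `E = {1, 2, 3, …}`, let `P(1,·) = δ₁` and `P(i,·) = (1 - 2^{1-i}) δ₁ + 2^{1-i} δ_{i+1}`
for `i ≥ 2`. Then (i) for every `n ≥ 1` one has `P_n(1,{n+2}) = 0` while `P_n(2,{n+2}) > 0`,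
so the strong mixing condition (A.3) fails for every `n ≥ 1` and every `L`; and (ii)
nevertheless a bounded MPE solution exists for every bounded `g`. -/
theorem mpe_exists_without_strong_mixing
    (P : Kernel ℕ+ ℕ+) [IsMarkovKernel P]
    (hP1 : P 1 = Measure.dirac 1)
    (hPi : ∀ i : ℕ+, 2 ≤ i →
      P i = ENNReal.ofReal (1 - (2 : ℝ) ^ ((1 : ℝ) - (i : ℝ))) • Measure.dirac 1
        + ENNReal.ofReal ((2 : ℝ) ^ ((1 : ℝ) - (i : ℝ))) • Measure.dirac (i + 1)) :
    (∀ n : ℕ, 1 ≤ n →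
      (stepKernel P n) 1 {(⟨n + 2, by omega⟩ : ℕ+)} = 0 ∧
      0 < (stepKernel P n) 2 {(⟨n + 2, by omega⟩ : ℕ+)} ∧
      ∀ L : ℝ, ¬ (∀ x x' : ℕ+, ∀ B : Set ℕ+,
        ((stepKernel P n) x B).toReal ≤ L * ((stepKernel P n) x' B).toReal)) ∧
    (∀ g : ℕ+ → ℝ, (∃ Cg : ℝ, ∀ x, |g x| ≤ Cg) →
      ∃ (w : ℕ+ → ℝ) (lam : ℝ), (∃ C : ℝ, ∀ x, |w x| ≤ C) ∧
        ∀ x : ℕ+, w x = g x - lam + Real.log (∫ y, Real.exp (w y) ∂(P x))) := by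
  -- Markov property of the iterates
  have hMarkov : ∀ n, IsMarkovKernel (stepKernel P n) := by
    intro n
    induction n with
    | zero => simp only [stepKernel]; infer_instance
    | succ n ih => simp only [stepKernel]; exact Kernel.IsMarkovKernel.comp _ _
  -- the chain started at 1 stays at 1
  have hstep1 : ∀ n, stepKernel P n 1 = Measure.dirac 1 := by
    intro n
    induction n with
    | zero => simp only [stepKernel]; exact Kernel.id_apply 1
    | succ n ih =>
      simp only [stepKernel]
      rw [Kernel.comp_apply, hP1, Measure.dirac_bind (stepKernel P n).measurable, ih]
  -- positivity of the forward path
  have hpos : ∀ n (i : ℕ+), 2 ≤ i → ∀ j : ℕ+, (j : ℕ) = (i : ℕ) + n →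
      0 < stepKernel P n i {j} := by
    intro n
    induction n with
    | zero =>
      intro i hi j hj
      have : j = i := PNat.coe_injective (by omega)
      subst this
      simp only [stepKernel]
      rw [Kernel.id_apply]
      simp
    | succ n ih =>
      intro i hi j hj
      simp only [stepKernel]
      rw [Kernel.comp_apply' _ _ _ (measurableSet_singleton j), hPi i hi]
      rw [lintegral_add_measure, lintegral_smul_measure, lintegral_smul_measure,
        lintegral_dirac' _ ((stepKernel P n).measurable_coe (measurableSet_singleton j)),
        lintegral_dirac' _ ((stepKernel P n).measurable_coe (measurableSet_singleton j))]
      have h2 : (2:ℕ+) ≤ i + 1 := by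
        have h := i.one_le
        rw [← PNat.coe_le_coe] at h ⊢
        rw [PNat.add_coe]
        simp only [PNat.one_coe, PNat.val_ofNat] at h ⊢
        omega
      have hj' : (j : ℕ) = ((i + 1 : ℕ+) : ℕ) + n := by
        rw [PNat.add_coe]
        simp only [PNat.one_coe]
        omega
      have hκ : 0 < stepKernel P n (i + 1) {j} := ih (i + 1) h2 j hj'
      have hc : (0:ENNReal) < ENNReal.ofReal ((2 : ℝ) ^ ((1 : ℝ) - (i : ℝ))) :=
        ENNReal.ofReal_pos.2 (Real.rpow_pos_of_pos two_pos _)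
      calc (0:ENNReal) < ENNReal.ofReal ((2 : ℝ) ^ ((1 : ℝ) - (i : ℝ))) *
            stepKernel P n (i + 1) {j} := ENNReal.mul_pos hc.ne' hκ.ne'
        _ ≤ _ := le_add_self
  constructor
  · -- part (i)
    intro n hn
    have h0 : (stepKernel P n) 1 {(⟨n + 2, by omega⟩ : ℕ+)} = 0 := by
      rw [hstep1 n]
      refine (Measure.dirac_apply' _ (measurableSet_singleton _)).trans ?_
      apply Set.indicator_of_notMem
      intro h
      have h2 : (1 : ℕ) = n + 2 := congrArg PNat.val (Set.mem_singleton_iff.1 h)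
      omega
    have hp : 0 < (stepKernel P n) 2 {(⟨n + 2, by omega⟩ : ℕ+)} :=
      hpos n 2 le_rfl _ (by
        show n + 2 = ((2 : ℕ+) : ℕ) + n
        simp only [PNat.val_ofNat]
        omega)
    refine ⟨h0, hp, ?_⟩
    intro L hL
    have := hL 2 1 {(⟨n + 2, by omega⟩ : ℕ+)}
    rw [h0] at this
    simp only [ENNReal.toReal_zero, mul_zero] at this
    haveI := hMarkov n
    have hne : (stepKernel P n) 2 {(⟨n + 2, by omega⟩ : ℕ+)} ≠ ⊤ := measure_ne_top _ _
    have hpos' : 0 < ((stepKernel P n) 2 {(⟨n + 2, by omega⟩ : ℕ+)}).toReal :=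
      ENNReal.toReal_pos hp.ne' hne
    linarith
  · -- part (ii)
    rintro g ⟨Cg, hCg⟩
    have hCg0 : 0 ≤ Cg := le_trans (abs_nonneg _) (hCg 1)
    set a : ℕ → ℝ := fun m => Real.exp (g m.toPNat' - g 1) with ha_def
    set ea : ℝ := Real.exp (2 * Cg) with hea_def
    have ha : ∀ m, 0 < a m := fun m => Real.exp_pos _
    have hae : ∀ m, a m ≤ ea := by
      intro m
      apply Real.exp_le_exp.2
      have h1 := hCg m.toPNat'
      have h2 := hCg 1
      have := abs_le.1 h1
      have := abs_le.1 h2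
      linarith [abs_le.1 h1, abs_le.1 h2]
    have hal : ∀ m, Real.exp (-(2 * Cg)) ≤ a m := by
      intro m
      apply Real.exp_le_exp.2
      linarith [abs_le.1 (hCg m.toPNat'), abs_le.1 (hCg 1)]
    have hea : 1 ≤ ea := Real.one_le_exp (by linarith)
    set u : ℕ → ℝ := MpeCE.u a with hu_def
    -- bounds for u
    set Mx : ℝ := max (∑' k, MpeCE.b ea k) 1 with hMx_def
    have hMx1 : 1 ≤ Mx := le_max_right _ _
    have hu_le : ∀ m, u m ≤ Mx := fun m => MpeCE.u_le ha hae hea m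
    have hu_pos : ∀ m, 0 < u m := fun m => MpeCE.u_pos ha hae hea m
    set mn : ℝ := Real.exp (-(2 * Cg)) / 2 with hmn_def
    have hmn_pos : 0 < mn := by positivity
    have hmn_le1 : mn ≤ 1 := by
      have : Real.exp (-(2 * Cg)) ≤ 1 := Real.exp_le_one_iff.2 (by linarith)
      rw [hmn_def]; linarith
    have hu_lower : ∀ m, 1 ≤ m → mn ≤ u m := by
      intro m hm
      rcases le_or_gt m 1 with h | h
      · have : u m = 1 := if_pos h
        rw [this]; exact hmn_le1
      · have h2 : 2 ≤ m := by omega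
        have := MpeCE.u_lower ha hae hea h2
        have := hal m
        rw [hmn_def]
        nlinarith [hal m, MpeCE.u_lower ha hae hea h2]
    have hu1 : u ((1:ℕ+) : ℕ) = 1 := if_pos (by norm_num)
    refine ⟨fun x => Real.log (u x), g 1, ⟨Real.log Mx - Real.log mn, ?_⟩, ?_⟩
    · intro x
      have hx1 : 1 ≤ (x : ℕ) := x.one_le
      have hlM : 0 ≤ Real.log Mx := Real.log_nonneg hMx1
      have hlm : Real.log mn ≤ 0 := Real.log_nonpos hmn_pos.le hmn_le1
      have hup : Real.log (u x) ≤ Real.log Mx :=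
        Real.log_le_log (hu_pos _) (hu_le _)
      have hlo : Real.log mn ≤ Real.log (u x) :=
        Real.log_le_log hmn_pos (hu_lower _ hx1)
      rw [abs_le]
      constructor <;> linarith
    · intro x
      -- integrability against diracs
      have hmeas : Measurable (fun y : ℕ+ => Real.exp (Real.log (u y))) := fun _ _ =>
        MeasurableSpace.measurableSet_top
      have hIntD : ∀ c : ℕ+, Integrable (fun y : ℕ+ => Real.exp (Real.log (u y)))
          (Measure.dirac c) := by
        intro c
        refine ⟨hmeas.aestronglyMeasurable, ?_⟩
        simp only [HasFiniteIntegral, lintegral_dirac]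
        exact ENNReal.coe_lt_top
      rcases eq_or_lt_of_le x.one_le with hx1 | hx2
      · -- x = 1
        subst hx1
        rw [hP1, integral_dirac, Real.log_exp]
        ring
      · -- 2 ≤ x
        have hx2' : (2 : ℕ+) ≤ x := hx2
        have hm2 : 2 ≤ (x : ℕ) := hx2'
        have hq : MpeCE.q (x : ℕ) = (2 : ℝ) ^ ((1 : ℝ) - (x : ℝ)) := by
          simp [MpeCE.q]
        have hq_half := MpeCE.q_le_half hm2
        have hq_pos := MpeCE.q_pos (x : ℕ)
        rw [hPi x hx2']
        rw [integral_add_measure ((hIntD 1).smul_measure ENNReal.ofReal_ne_top)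
          ((hIntD (x + 1)).smul_measure ENNReal.ofReal_ne_top)]
        rw [integral_smul_measure, integral_smul_measure, integral_dirac, integral_dirac]
        rw [ENNReal.toReal_ofReal (by rw [← hq]; linarith),
          ENNReal.toReal_ofReal (by rw [← hq]; linarith)]
        rw [Real.exp_log (hu_pos _), Real.exp_log (hu_pos _)]
        rw [hu1]
        have hcoe : ((x + 1 : ℕ+) : ℕ) = (x : ℕ) + 1 := PNat.add_coe x 1
        have hrec := MpeCE.u_rec ha hae hea hm2
        have hupos : 0 < (1 - MpeCE.q (x : ℕ)) + MpeCE.q (x : ℕ) * u ((x : ℕ) + 1) := by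
          have := hu_pos ((x : ℕ) + 1)
          nlinarith
        have hax : a (x : ℕ) = Real.exp (g x - g 1) := by
          rw [ha_def]
          simp [PNat.coe_toPNat']
        rw [hcoe]
        calc Real.log (u (x : ℕ))
            = Real.log (a (x : ℕ) * ((1 - MpeCE.q (x : ℕ)) +
              MpeCE.q (x : ℕ) * u ((x : ℕ) + 1))) := by rw [← hrec]
          _ = Real.log (a (x : ℕ)) + Real.log ((1 - MpeCE.q (x : ℕ)) +
              MpeCE.q (x : ℕ) * u ((x : ℕ) + 1)) :=
            Real.log_mul (ha _).ne' hupos.ne'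
          _ = g x - g 1 + Real.log ((1 - (2 : ℝ) ^ ((1 : ℝ) - (x : ℝ))) • 1 +
              (2 : ℝ) ^ ((1 : ℝ) - (x : ℝ)) • u ((x : ℕ) + 1)) := by
            rw [hax, Real.log_exp, ← hq]
            simp [smul_eq_mul]
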